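/- Let n be a natural number and write ℂⁿ for EuclideanSpace ℂ (Fin n), with star z denoting componentwise complex conjugation. Let g : ℂⁿ → ℂⁿ be holomorphic (Fréchet ℂ-differentiable everywhere) and define the antiholomorphic map σ : ℂⁿ → ℂⁿ by σ(z) = g(star z). Let ψ : ℂⁿ → ℝ be of class C² (ContDiff ℝ 2) and plurisubharmonic in the Hessian sense: for every a, v ∈ ℂⁿ, the function t ↦ ψ(a + t • v) on ℂ has nonnegative Laplacian at 0. Then u = ψ ∘ σ is of class C² and is plurisubharmonic in the same Hessian sense: for every a, v ∈ ℂⁿ, the function t ↦ u(a + t • v) has nonnegative Laplacian at 0. -/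

import Mathlib

open Complex

/-- The Laplacian at `0` of a function `h : ℂ → ℝ`, computed from the second real
Fréchet derivative: `D²h(0)(1,1) + D²h(0)(i,i)`. -/
noncomputable def laplacianAtZero (h : ℂ → ℝ) : ℝ :=
  iteratedFDeriv ℝ 2 h 0 ![1, 1] + iteratedFDeriv ℝ 2 h 0 ![Complex.I, Complex.I]

/-- Componentwise complex conjugation on `ℂⁿ`. -/
def conjVec {n : ℕ} (z : EuclideanSpace ℂ (Fin n)) : EuclideanSpace ℂ (Fin n) :=
  WithLp.toLp 2 fun i => starRingEnd ℂ (z i)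

open Metric MeasureTheory intervalIntegral

section CauchyCore
variable {E F : Type*} [NormedAddCommGroup E] [NormedSpace ℂ E]
  [NormedAddCommGroup F] [NormedSpace ℂ F] [CompleteSpace F]

/-- kernel -/
noncomputable def cker (θ : ℝ) : ℂ := circleMap 0 1 θ * I * (circleMap 0 1 θ) ^ (-2 : ℤ)

lemma norm_cker (θ : ℝ) : ‖cker θ‖ = 1 := by
  have h : circleMap 0 1 θ ≠ 0 := by
    simpa using circleMap_ne_center (c := (0:ℂ)) (R := 1) one_ne_zero (θ := θ)
  simp [cker, norm_mul, norm_zpow, norm_circleMap_zero]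

lemma continuous_cker : Continuous cker := by
  apply Continuous.mul (by continuity)
  apply Continuous.zpow₀ (continuous_circleMap 0 1) _ (fun θ => Or.inl ?_)
  simpa using circleMap_ne_center (c := (0:ℂ)) (R := 1) one_ne_zero (θ := θ)

lemma hasDerivAt_line (f : E → F) (hf : Differentiable ℂ f) (z w : E) (t : ℂ) :
    HasDerivAt (fun l : ℂ => f (z + l • w)) (fderiv ℂ f (z + t • w) w) t := by
  have h1 : HasDerivAt (fun l : ℂ => z + l • w) w t := by
    simpa using ((hasDerivAt_id t).smul_const w).const_add z
  have h2 := (hf _).hasFDerivAt.comp_hasDerivAt t h1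
  exact h2

/-- Part 1: Cauchy representation of directional derivative. -/
lemma fderiv_rep (f : E → F) (hf : Differentiable ℂ f) (z w : E) :
    fderiv ℂ f z w
      = (2 * Real.pi * I : ℂ)⁻¹ • ∫ θ in (0:ℝ)..(2*Real.pi), cker θ • f (z + circleMap 0 1 θ • w) := by
  have hd : Differentiable ℂ (fun l : ℂ => f (z + l • w)) :=
    fun t => (hasDerivAt_line f hf z w t).differentiableAt
  have h0 : deriv (fun l : ℂ => f (z + l • w)) 0 = fderiv ℂ f z w := by
    simpa using (hasDerivAt_line f hf z w 0).deriv
  have hC := (hd.diffContOnCl (s := ball (0:ℂ) 1)).deriv_eq_smul_circleIntegral one_pos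
  rw [← h0, eq_inv_smul_iff₀ two_pi_I_ne_zero, ← hC]
  rw [circleIntegral]
  congr 1 with θ
  simp [cker, deriv_circleMap, smul_smul, mul_comm, mul_assoc, mul_left_comm]

variable [FiniteDimensional ℂ E]

/-- Part 2: local uniform bound on the derivative. -/
lemma fderiv_bound (f : E → F) (hf : Differentiable ℂ f) (z₀ : E) (r : ℝ) :
    ∃ M : ℝ, ∀ z ∈ ball z₀ r, ‖fderiv ℂ f z‖ ≤ M := by
  obtain ⟨M₀, hM₀⟩ := (isCompact_closedBall z₀ (r + 1)).exists_bound_of_continuousOn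
    hf.continuous.continuousOn
  set M := max M₀ 0 with hMdef
  have hM : ∀ x ∈ closedBall z₀ (r + 1), ‖f x‖ ≤ M := fun x hx => (hM₀ x hx).trans (le_max_left _ _)
  have hM0 : 0 ≤ M := le_max_right _ _
  refine ⟨M, fun z hz => ?_⟩
  apply ContinuousLinearMap.opNorm_le_bound _ hM0
  intro w
  rcases eq_or_ne w 0 with rfl | hw
  · simp
  · -- reduce to unit vector
    set u : E := ‖w‖⁻¹ • w with hu
    have hnu : ‖u‖ = 1 := by
      rw [hu, norm_smul]; simp [norm_ne_zero_iff.2 hw]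
    have key : ‖fderiv ℂ f z u‖ ≤ M := by
      have hline := hasDerivAt_line f hf z u 0
      have h0 : deriv (fun l : ℂ => f (z + l • u)) 0 = fderiv ℂ f z u := by
        simpa using (hasDerivAt_line f hf z u 0).deriv
      rw [← h0]
      have := Complex.norm_deriv_le_of_forall_mem_sphere_norm_le (c := (0:ℂ)) (R := 1) (C := M)
        one_pos ((show Differentiable ℂ (fun l : ℂ => f (z + l • u)) from
          fun t => (hasDerivAt_line f hf z u t).differentiableAt).diffContOnCl)
        ?_
      · simpa using this
      · intro l hl
        apply hM
        have hl1 : ‖l‖ = 1 := by simpa using hl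
        have : ‖z + l • u - z₀‖ ≤ ‖z - z₀‖ + ‖l • u‖ := by
          have : z + l • u - z₀ = (z - z₀) + l • u := by abel
          rw [this]; exact norm_add_le _ _
        simp only [mem_closedBall, dist_eq_norm]
        refine le_trans this ?_
        rw [norm_smul, hl1, hnu]
        have : ‖z - z₀‖ < r := by simpa [mem_ball, dist_eq_norm] using hz
        linarith
    have hw' : w = ‖w‖ • u := by
      rw [hu, smul_smul]; simp [norm_ne_zero_iff.2 hw]
    calc ‖fderiv ℂ f z w‖ = ‖fderiv ℂ f z ((‖w‖ : ℝ) • u)‖ := by rw [← hw']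
      _ = ‖w‖ * ‖fderiv ℂ f z u‖ := by rw [ContinuousLinearMap.map_smul_of_tower, norm_smul]; simp
      _ ≤ ‖w‖ * M := by
          exact mul_le_mul_of_nonneg_left key (norm_nonneg _)
      _ = M * ‖w‖ := mul_comm _ _

/-- Part 3: continuity of directional derivative. -/
lemma continuous_fderiv_apply (f : E → F) (hf : Differentiable ℂ f) (w : E) :
    Continuous (fun z => fderiv ℂ f z w) := by
  have : (fun z => fderiv ℂ f z w)
      = fun z => (2 * Real.pi * I : ℂ)⁻¹ • ∫ θ in (0:ℝ)..(2*Real.pi),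
          cker θ • f (z + circleMap 0 1 θ • w) := by
    funext z; exact fderiv_rep f hf z w
  rw [this]
  apply Continuous.const_smul
  apply intervalIntegral.continuous_parametric_intervalIntegral_of_continuous'
  apply Continuous.smul (continuous_cker.comp continuous_snd)
  exact hf.continuous.comp (continuous_fst.add ((continuous_circleMap 0 1).comp continuous_snd |>.smul continuous_const))


set_option maxHeartbeats 1000000 in
set_option synthInstance.maxHeartbeats 1000000 in
/-- Part 4: operator-norm continuity of the derivative. -/
lemma continuous_fderiv_of_diff (f : E → F) (hf : Differentiable ℂ f) :
    Continuous (fderiv ℂ f) := by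
  let b := Module.Basis.ofVectorSpace ℂ E
  have hrepr : ∀ z : E, fderiv ℂ f z
      = ∑ j, (ContinuousLinearMap.smulRightL ℂ E F
          (LinearMap.toContinuousLinearMap (b.coord j))) (fderiv ℂ f z (b j)) := by
    intro z
    ext w
    have : (fderiv ℂ f z) w = (fderiv ℂ f z) (∑ j, b.repr w j • b j) := by
      rw [b.sum_repr w]
    rw [this, map_sum]
    simp only [ContinuousLinearMap.sum_apply]
    refine Finset.sum_congr rfl fun j _ => ?_
    show (fderiv ℂ f z) (b.repr w j • b j)
      = ((LinearMap.toContinuousLinearMap (b.coord j)).smulRight ((fderiv ℂ f z) (b j))) w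
    rw [ContinuousLinearMap.smulRight_apply, (fderiv ℂ f z).map_smul]
    simp [LinearMap.coe_toContinuousLinearMap', Module.Basis.coord_apply]
  rw [funext hrepr]
  exact continuous_finset_sum _ fun j _ =>
    (ContinuousLinearMap.smulRightL ℂ E F _).continuous.comp
      (continuous_fderiv_apply f hf (b j))

set_option maxHeartbeats 1000000 in
set_option synthInstance.maxHeartbeats 1000000 in
/-- Part 5: the directional derivative of `f` is differentiable, with explicit derivative. -/
lemma hasFDerivAt_fderiv_apply (f : E → F) (hf : Differentiable ℂ f) (w z₀ : E) :
    HasFDerivAt (fun z => fderiv ℂ f z w)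
      ((2 * Real.pi * I : ℂ)⁻¹ • ∫ θ in (0:ℝ)..(2*Real.pi),
        cker θ • (fderiv ℂ f (z₀ + circleMap 0 1 θ • w))) z₀ := by
  have hDc := continuous_fderiv_of_diff f hf
  obtain ⟨M, hM⟩ := fderiv_bound f hf z₀ (1 + ‖w‖ + 1)
  have hcont : ∀ x : E, Continuous (fun θ : ℝ => cker θ • f (x + circleMap 0 1 θ • w)) :=
    fun x => continuous_cker.smul (hf.continuous.comp
      (continuous_const.add ((continuous_circleMap 0 1).smul continuous_const)))
  have hcont' : Continuous (fun θ : ℝ => cker θ • fderiv ℂ f (z₀ + circleMap 0 1 θ • w)) :=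
    continuous_cker.smul (hDc.comp
      (continuous_const.add ((continuous_circleMap 0 1).smul continuous_const)))
  have h_bound : ∀ᵐ θ ∂(MeasureTheory.volume), θ ∈ Set.uIoc (0:ℝ) (2*Real.pi) →
      ∀ x ∈ ball z₀ 1, ‖cker θ • fderiv ℂ f (x + circleMap 0 1 θ • w)‖ ≤ M := by
    refine Filter.Eventually.of_forall fun θ _ x hx => ?_
    refine le_trans (ContinuousLinearMap.opNorm_smul_le _ _) ?_
    rw [norm_cker, one_mul]
    apply hM
    rw [mem_ball] at hx ⊢
    calc dist (x + circleMap 0 1 θ • w) z₀ ≤ dist x z₀ + ‖circleMap 0 1 θ • w‖ := by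
          rw [dist_eq_norm, dist_eq_norm]
          have h : x + circleMap 0 1 θ • w - z₀ = (x - z₀) + circleMap 0 1 θ • w := by abel
          rw [h]; exact norm_add_le _ _
      _ < 1 + ‖w‖ + 1 := by
          have h1 : ‖circleMap 0 1 θ • w‖ ≤ ‖w‖ := by
            rw [norm_smul]; simp [norm_circleMap_zero]
          linarith
  have h_diff : ∀ᵐ θ ∂(MeasureTheory.volume), θ ∈ Set.uIoc (0:ℝ) (2*Real.pi) →
      ∀ x ∈ ball z₀ 1, HasFDerivAt (fun x => cker θ • f (x + circleMap 0 1 θ • w))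
        (cker θ • fderiv ℂ f (x + circleMap 0 1 θ • w)) x := by
    refine Filter.Eventually.of_forall fun θ _ x _ => ?_
    have h1 : HasFDerivAt (fun x : E => x + circleMap 0 1 θ • w)
        (ContinuousLinearMap.id ℂ E) x := (hasFDerivAt_id x).add_const _
    have h2 := ((hf _).hasFDerivAt.comp x h1).const_smul (cker θ)
    simp at h2; exact h2
  have key := intervalIntegral.hasFDerivAt_integral_of_dominated_of_fderiv_le
    (𝕜 := ℂ) (μ := MeasureTheory.volume) (a := (0:ℝ)) (b := 2*Real.pi)
    (F := fun x θ => cker θ • f (x + circleMap 0 1 θ • w))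
    (F' := fun x θ => cker θ • fderiv ℂ f (x + circleMap 0 1 θ • w))
    (x₀ := z₀) (bound := fun _ => M) (ball_mem_nhds z₀ one_pos)
    (Filter.Eventually.of_forall fun x => ((hcont x).aestronglyMeasurable).restrict)
    ((hcont z₀).intervalIntegrable _ _)
    (hcont'.aestronglyMeasurable.restrict)
    h_bound
    (intervalIntegrable_const)
    h_diff
  have heq : (fun z => fderiv ℂ f z w)
      = fun z => (2 * Real.pi * I : ℂ)⁻¹ • ∫ θ in (0:ℝ)..(2*Real.pi),
          cker θ • f (z + circleMap 0 1 θ • w) := funext fun z => fderiv_rep f hf z w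
  rw [heq]
  exact key.const_smul _

set_option maxHeartbeats 1000000 in
set_option synthInstance.maxHeartbeats 1000000 in
lemma clm_decomp (L : E →L[ℂ] F) :
    L = ∑ j, (ContinuousLinearMap.smulRightL ℂ E F
        (LinearMap.toContinuousLinearMap ((Module.Basis.ofVectorSpace ℂ E).coord j)))
          (L ((Module.Basis.ofVectorSpace ℂ E) j)) := by
  set b := Module.Basis.ofVectorSpace ℂ E with hb
  ext w
  have : L w = L (∑ j, b.repr w j • b j) := by rw [b.sum_repr w]
  rw [this, map_sum]
  simp only [ContinuousLinearMap.sum_apply]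
  refine Finset.sum_congr rfl fun j _ => ?_
  show L (b.repr w j • b j)
    = ((LinearMap.toContinuousLinearMap (b.coord j)).smulRight (L (b j))) w
  rw [ContinuousLinearMap.smulRight_apply, L.map_smul]
  simp [LinearMap.coe_toContinuousLinearMap', Module.Basis.coord_apply]

set_option maxHeartbeats 1000000 in
set_option synthInstance.maxHeartbeats 1000000 in
lemma contDiff_one_fderiv_apply (f : E → F) (hf : Differentiable ℂ f) (w : E) :
    ContDiff ℂ 1 (fun z => fderiv ℂ f z w) := by
  rw [contDiff_one_iff_fderiv]
  constructor
  · exact fun z₀ => (hasFDerivAt_fderiv_apply f hf w z₀).differentiableAt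
  · have hDc := continuous_fderiv_of_diff f hf
    have : fderiv ℂ (fun z => fderiv ℂ f z w)
        = fun z₀ => (2 * Real.pi * I : ℂ)⁻¹ • ∫ θ in (0:ℝ)..(2*Real.pi),
            cker θ • (fderiv ℂ f (z₀ + circleMap 0 1 θ • w)) :=
      funext fun z₀ => (hasFDerivAt_fderiv_apply f hf w z₀).fderiv
    rw [this]
    refine Continuous.smul (f := fun _ => (2 * Real.pi * I : ℂ)⁻¹) continuous_const ?_
    apply intervalIntegral.continuous_parametric_intervalIntegral_of_continuous'
    exact Continuous.smul (continuous_cker.comp continuous_snd)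
      (hDc.comp (continuous_fst.add
        (((continuous_circleMap 0 1).comp continuous_snd).smul continuous_const)))

set_option maxHeartbeats 1000000 in
set_option synthInstance.maxHeartbeats 1000000 in
lemma contDiff_two_of_differentiable (f : E → F) (hf : Differentiable ℂ f) :
    ContDiff ℂ 2 f := by
  have hD1 : ContDiff ℂ 1 (fderiv ℂ f) := by
    have : fderiv ℂ f = fun z => ∑ j, (ContinuousLinearMap.smulRightL ℂ E F
        (LinearMap.toContinuousLinearMap ((Module.Basis.ofVectorSpace ℂ E).coord j)))
          (fderiv ℂ f z ((Module.Basis.ofVectorSpace ℂ E) j)) := funext fun z => clm_decomp _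
    rw [this]
    exact ContDiff.sum fun j _ =>
      (ContinuousLinearMap.smulRightL ℂ E F _).contDiff.comp
        (contDiff_one_fderiv_apply f hf _)
  have h2 : (2 : WithTop ℕ∞) = 1 + 1 := by norm_num
  rw [h2, contDiff_succ_iff_fderiv]
  exact ⟨hf, by simp, hD1⟩

end CauchyCore

section Lap
variable {E : Type*} [NormedAddCommGroup E] [NormedSpace ℂ E]

/-- conj invariance of the Laplacian -/
lemma lap_conj (h : ℂ → ℝ) (hh : ContDiff ℝ 2 h) :
    laplacianAtZero (fun t => h ((starRingEnd ℂ) t)) = laplacianAtZero h := by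
  have hc : (fun t => h ((starRingEnd ℂ) t)) = h ∘ (Complex.conjCLE : ℂ →L[ℝ] ℂ) := by
    funext t; simp
  have hrw : ∀ m : Fin 2 → ℂ, iteratedFDeriv ℝ 2 (h ∘ (Complex.conjCLE : ℂ →L[ℝ] ℂ)) 0 m
      = iteratedFDeriv ℝ 2 h 0 (fun i => (starRingEnd ℂ) (m i)) := by
    intro m
    rw [ContinuousLinearMap.iteratedFDeriv_comp_right ((Complex.conjCLE : ℂ →L[ℝ] ℂ)) hh
      (0 : ℂ) (by norm_num)]
    simp [ContinuousMultilinearMap.compContinuousLinearMap_apply]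
  rw [laplacianAtZero, laplacianAtZero, hc, hrw, hrw]
  have e1 : (fun i => (starRingEnd ℂ) (![(1:ℂ), 1] i)) = ![(1:ℂ), 1] := by
    funext i; fin_cases i <;> simp
  have hsm := (iteratedFDeriv ℝ 2 h 0).map_smul_univ (fun _ => (-1:ℝ)) ![Complex.I, Complex.I]
  have h1 : (fun i => (starRingEnd ℂ) (![Complex.I, Complex.I] i))
      = fun i => (-1:ℝ) • ![Complex.I, Complex.I] i := by
    funext i; fin_cases i <;> simp
  rw [e1, h1, hsm]
  simp
end Lap

section Comp
variable {E : Type*} [NormedAddCommGroup E] [NormedSpace ℂ E] [CompleteSpace E]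

/-- second derivative of a composition along directions -/
lemma second_deriv_comp (ψ : E → ℝ) (hψ : ContDiff ℝ 2 ψ) (G : ℂ → E) (hG : ContDiff ℝ 2 G)
    (w : ℂ) :
    iteratedFDeriv ℝ 2 (fun t => ψ (G t)) 0 ![w, w]
      = fderiv ℝ (fderiv ℝ ψ) (G 0) ((fderiv ℝ G 0) w) ((fderiv ℝ G 0) w)
        + fderiv ℝ ψ (G 0) ((fderiv ℝ (fderiv ℝ G) 0 w) w) := by
  have hψd : Differentiable ℝ ψ := hψ.differentiable (by norm_num)
  have hGd : Differentiable ℝ G := hG.differentiable (by norm_num)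
  have hψ1 : ContDiff ℝ 1 (fderiv ℝ ψ) := hψ.fderiv_right (by norm_num)
  have hG1 : ContDiff ℝ 1 (fderiv ℝ G) := hG.fderiv_right (by norm_num)
  rw [iteratedFDeriv_two_apply]
  have heq : fderiv ℝ (fun t => ψ (G t)) = fun x => (fderiv ℝ ψ (G x)).comp (fderiv ℝ G x) := by
    funext x
    exact fderiv_comp x (hψd _) (hGd _)
  rw [heq]
  have hc : DifferentiableAt ℝ (fun x => fderiv ℝ ψ (G x)) 0 :=
    ((hψ1.differentiable one_ne_zero) (G 0)).comp 0 (hGd 0)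
  have hd : DifferentiableAt ℝ (fderiv ℝ G) 0 := (hG1.differentiable one_ne_zero) 0
  rw [fderiv_clm_comp hc hd]
  have hfc : fderiv ℝ (fun x => fderiv ℝ ψ (G x)) 0
      = (fderiv ℝ (fderiv ℝ ψ) (G 0)).comp (fderiv ℝ G 0) :=
    fderiv_comp 0 ((hψ1.differentiable one_ne_zero) (G 0)) (hGd 0)
  rw [hfc]
  simp [Matrix.cons_val_zero, Matrix.cons_val_one]
  ring
end Comp

section Holo
variable {E : Type*} [NormedAddCommGroup E] [NormedSpace ℂ E] [CompleteSpace E]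

lemma holo_fst (G : ℂ → E) (hG : Differentiable ℂ G) (w : ℂ) :
    fderiv ℝ G 0 w = w • (fderiv ℝ G 0 1) := by
  rw [(hG 0).fderiv_restrictScalars ℝ]
  show (fderiv ℂ G 0) w = w • (fderiv ℂ G 0) 1
  conv_lhs => rw [show w = w • (1:ℂ) by simp]
  rw [_root_.map_smul]

lemma holo_snd (G : ℂ → E) (hG : Differentiable ℂ G) (w : ℂ) :
    fderiv ℝ (fderiv ℝ G) 0 w w = (w * w) • (fderiv ℝ (fderiv ℝ G) 0 1 1) := by
  have hGs : ContDiff ℂ 2 G := hG.contDiff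
  have hD : Differentiable ℂ (fderiv ℂ G) :=
    (hGs.fderiv_right (m := 1) (by norm_num)).differentiable one_ne_zero
  set R : (ℂ →L[ℂ] E) →L[ℝ] (ℂ →L[ℝ] E) :=
    ContinuousLinearMap.restrictScalarsL ℂ ℂ E ℝ ℝ with hR
  have h1 : fderiv ℝ G = fun z => R (fderiv ℂ G z) := by
    funext z
    exact (hG z).fderiv_restrictScalars ℝ
  have h2 : fderiv ℝ (fun z => R (fderiv ℂ G z)) 0
      = R.comp (fderiv ℝ (fderiv ℂ G) 0) := by
    have h := fderiv_comp (𝕜 := ℝ) 0 R.differentiableAt ((hD 0).restrictScalars ℝ)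
    rw [R.fderiv] at h
    simpa [Function.comp_def] using h
  have h3 : fderiv ℝ (fderiv ℂ G) 0 = (fderiv ℂ (fderiv ℂ G) 0).restrictScalars ℝ :=
    (hD 0).fderiv_restrictScalars ℝ
  rw [h1, h2, h3]
  show ((fderiv ℂ (fderiv ℂ G) 0) w) w = (w * w) • ((fderiv ℂ (fderiv ℂ G) 0) 1) 1
  have h4 : (fderiv ℂ (fderiv ℂ G) 0) w = w • (fderiv ℂ (fderiv ℂ G) 0) 1 := by
    conv_lhs => rw [show w = w • (1:ℂ) by simp]
    rw [_root_.map_smul]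
  have h5 : ((fderiv ℂ (fderiv ℂ G) 0) 1) w = w • ((fderiv ℂ (fderiv ℂ G) 0) 1) 1 := by
    conv_lhs => rw [show w = w • (1:ℂ) by simp]
    rw [_root_.map_smul]
  rw [h4, ContinuousLinearMap.smul_apply, h5, smul_smul]

/-- Laplacian of ψ ∘ G for holomorphic G equals Laplacian of the affine composition. -/
lemma lap_comp_holo (ψ : E → ℝ) (hψ : ContDiff ℝ 2 ψ) (G : ℂ → E) (hG : Differentiable ℂ G) :
    laplacianAtZero (fun t => ψ (G t))
      = laplacianAtZero (fun t => ψ (G 0 + t • (fderiv ℝ G 0 1))) := by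
  set v := fderiv ℝ G 0 1 with hv
  set L : ℂ → E := fun t => G 0 + t • v with hL
  have hB : ∀ z : ℂ, HasFDerivAt L ((1 : ℂ →L[ℂ] ℂ).smulRight v) z := fun z =>
    (((1 : ℂ →L[ℂ] ℂ).smulRight v).hasFDerivAt (x := z)).const_add (G 0)
  have hLd : Differentiable ℂ L := fun z => (hB z).differentiableAt
  have hGC : ContDiff ℝ 2 G := (hG.contDiff (n := 2)).restrict_scalars ℝ
  have hLC : ContDiff ℝ 2 L := (hLd.contDiff (n := 2)).restrict_scalars ℝ
  have hL0 : L 0 = G 0 := by simp [hL]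
  have hLv : fderiv ℝ L 0 1 = v := by
    rw [((hB 0).restrictScalars ℝ).fderiv]
    simp
  have hLsnd : fderiv ℝ (fderiv ℝ L) 0 = 0 := by
    have hconst : fderiv ℝ L
        = fun _ : ℂ => (((1 : ℂ →L[ℂ] ℂ).smulRight v).restrictScalars ℝ) := by
      funext z
      exact ((hB z).restrictScalars ℝ).fderiv
    rw [hconst]
    exact fderiv_const_apply _
  rw [laplacianAtZero, laplacianAtZero]
  rw [second_deriv_comp ψ hψ G hGC, second_deriv_comp ψ hψ G hGC,
    second_deriv_comp ψ hψ L hLC, second_deriv_comp ψ hψ L hLC]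
  rw [hL0]
  rw [holo_fst G hG Complex.I, holo_snd G hG Complex.I, holo_fst L hLd Complex.I, hLv, hLsnd]
  simp only [Complex.I_mul_I, neg_smul, one_smul, map_neg, ContinuousLinearMap.zero_apply,
    map_zero]
  ring
end Holo

section ConjVec

variable {n : ℕ}

def conjLM (n : ℕ) : EuclideanSpace ℂ (Fin n) →ₗ[ℝ] EuclideanSpace ℂ (Fin n) where
  toFun := conjVec
  map_add' x y := by
    ext i
    simp [conjVec]
  map_smul' r x := by
    ext i
    simp [conjVec, Complex.real_smul]

noncomputable def conjCLM (n : ℕ) : EuclideanSpace ℂ (Fin n) →L[ℝ] EuclideanSpace ℂ (Fin n) :=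
  LinearMap.toContinuousLinearMap (conjLM n)

lemma conjCLM_apply (z : EuclideanSpace ℂ (Fin n)) : conjCLM n z = conjVec z := rfl

lemma conjVec_add_smul (a v : EuclideanSpace ℂ (Fin n)) (t : ℂ) :
    conjVec (a + t • v) = conjVec a + (starRingEnd ℂ t) • conjVec v := by
  ext i
  simp [conjVec]

end ConjVec

/-- If `ψ` is a `C²` plurisubharmonic function (in the Hessian/Laplacian sense) on `ℂⁿ`
and `σ(z) = g(star z)` is antiholomorphic (with `g` holomorphic), then `ψ ∘ σ` is `C²`
and plurisubharmonic. -/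
theorem psh_comp_antiholomorphic (n : ℕ)
    (g : EuclideanSpace ℂ (Fin n) → EuclideanSpace ℂ (Fin n))
    (hg : ∀ z, DifferentiableAt ℂ g z)
    (σ : EuclideanSpace ℂ (Fin n) → EuclideanSpace ℂ (Fin n))
    (hσ : ∀ z, σ z = g (conjVec z))
    (ψ : EuclideanSpace ℂ (Fin n) → ℝ) (hψ : ContDiff ℝ 2 ψ)
    (hpsh : ∀ a v : EuclideanSpace ℂ (Fin n),
      0 ≤ laplacianAtZero fun t : ℂ => ψ (a + t • v)) :
    ContDiff ℝ 2 (ψ ∘ σ) ∧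
      ∀ a v : EuclideanSpace ℂ (Fin n),
        0 ≤ laplacianAtZero fun t : ℂ => (ψ ∘ σ) (a + t • v) := by
  have hgd : Differentiable ℂ g := fun z => hg z
  have hgC2 : ContDiff ℂ 2 g := contDiff_two_of_differentiable g hgd
  constructor
  · have hσfun : σ = (g ∘ (conjCLM n)) := by
      funext z
      rw [hσ]
      rfl
    rw [hσfun, ← Function.comp_assoc]
    exact (hψ.comp (hgC2.restrict_scalars ℝ)).comp (conjCLM n).contDiff
  · intro a v
    set G : ℂ → EuclideanSpace ℂ (Fin n) := fun s => g (conjVec a + s • conjVec v) with hGdef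
    have hGd : Differentiable ℂ G :=
      hgd.comp ((differentiable_const _).add (differentiable_id.smul_const _))
    have hfun : (fun t : ℂ => (ψ ∘ σ) (a + t • v))
        = fun t => (fun s => ψ (G s)) ((starRingEnd ℂ) t) := by
      funext t
      simp only [Function.comp_apply, hσ, hGdef]
      rw [conjVec_add_smul]
    rw [hfun]
    rw [lap_conj (fun t => ψ (G t)) (hψ.comp ((hGd.contDiff (n := 2)).restrict_scalars ℝ))]
    rw [lap_comp_holo ψ hψ G hGd]
    exact hpsh (G 0) (fderiv ℝ G 0 1)
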